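/- Let f be a submodular function on V and let P, P' be partitions of V with |P| < k < |P'|. Suppose there exists b ∈ ℝ with f(P) − b|P| = f(P') − b|P'| and f(P') − b|P'| ≤ f(Q) − b|Q| for every partition Q of V. Then for every k-partition P* of V, f(P*) ≥ ((|P'| − k)/(|P'| − |P|)) f(P) + ((k − |P|)/(|P'| − |P|)) f(P'). -/

import Mathlib

/-- A partition of the ground set: pairwise disjoint nonempty parts whose union is `V`. -/
def IsPartition {V : Type*} [Fintype V] [DecidableEq V] (P : Finset (Finset V)) : Prop :=
  (∀ p ∈ P, p.Nonempty) ∧ (P : Set (Finset V)).PairwiseDisjoint id ∧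
    P.sup id = (Finset.univ : Finset V)

/-- Lower bound on the optimum value of submodular `k`-partition from two consecutive
partitions in a principal partition sequence with `|P| < k < |P'|`:
`f(P*) ≥ ((|P'| − k)/(|P'| − |P|))·f(P) + ((k − |P|)/(|P'| − |P|))·f(P')` for every
`k`-partition `P*`. -/
theorem pps_interpolation_lower_bound {V : Type*} [Fintype V] [DecidableEq V]
    (f : Finset V → ℝ)
    (hsub : ∀ A B : Finset V, f (A ∩ B) + f (A ∪ B) ≤ f A + f B)
    (k : ℕ) (b : ℝ)
    (P P' : Finset (Finset V)) (hP : IsPartition P) (hP' : IsPartition P')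
    (hlt : P.card < k) (hgt : k < P'.card)
    (heq : (∑ p ∈ P, f p) - b * (P.card : ℝ) = (∑ p ∈ P', f p) - b * (P'.card : ℝ))
    (hmin : ∀ Q : Finset (Finset V), IsPartition Q →
      (∑ p ∈ P', f p) - b * (P'.card : ℝ) ≤ (∑ q ∈ Q, f q) - b * (Q.card : ℝ)) :
    ∀ Pstar : Finset (Finset V), IsPartition Pstar → Pstar.card = k →
      (((P'.card : ℝ) - k) / ((P'.card : ℝ) - P.card)) * (∑ p ∈ P, f p)
        + (((k : ℝ) - P.card) / ((P'.card : ℝ) - P.card)) * (∑ p ∈ P', f p)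
      ≤ ∑ p ∈ Pstar, f p := by
  intro Pstar hPs hcard
  have h := hmin Pstar hPs
  rw [hcard] at h
  have hD : (0:ℝ) < (P'.card : ℝ) - P.card := by
    have : P.card < P'.card := hlt.trans hgt
    have : (P.card : ℝ) < P'.card := by exact_mod_cast this
    linarith
  rw [div_mul_eq_mul_div, div_mul_eq_mul_div, ← add_div, div_le_iff₀ hD]
  nlinarith [h, heq, hD]
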